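/- Let $(p_j), (\alpha_j)$ be positive sequences in $\ell^1(\mathbb{N})$ with $p_{j+1}/p_j\in(m,M)$ for some $0<m<M<\infty$ and $\sup_j \alpha_j/p_j < \infty$. Let $\widehat{\mathbf{b}}$ be a symmetric $\eta$-banded real matrix with $|\widehat b_{ij}|\le\alpha_i$, and set $\mathbf{b} = I + \widehat{\mathbf{b}}$ entrywise. Then there exists $\widetilde C > 0$ such that for every $x = (x_j)\in\mathbb{R}^{\mathbb{N}}$, $\left|\sum_{j=1}^\infty \left(x_j^2 - ((\mathbf{b}x)_j)^2\right)\right| \le \widetilde C \sum_{j=1}^\infty x_j^2 p_j$ (both sides possibly infinite, with the convention that the inequality holds trivially when the right side is infinite). -/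

import Mathlib

open Finset

private lemma shift_summable' {f : ℕ → ℝ} (hf : Summable f) (η i : ℕ) :
    Summable fun j => f (j - η + i) := by
  have h : Summable fun n : ℕ => f (n + i) := (summable_nat_add_iff i).2 hf
  have h2 : Summable fun n : ℕ => (fun j => f (j - η + i)) (n + η) := by
    simpa using h
  exact (summable_nat_add_iff η).1 h2

private lemma shift_tsum_le' {f : ℕ → ℝ} (hf : Summable f) (hnn : ∀ j, 0 ≤ f j) (η i : ℕ) :
    ∑' j, f (j - η + i) ≤ ((η : ℝ) + 2) * ∑' j, f j := by
  have hs := shift_summable' hf η i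
  have key := Summable.sum_add_tsum_nat_add (f := fun j => f (j - η + i)) (η + 1) hs
  have h1 : ∑ j ∈ range (η + 1), f (j - η + i) = ((η : ℝ) + 1) * f i := by
    have hc : ∀ j ∈ range (η + 1), f (j - η + i) = f i := by
      intro j hj
      have := Finset.mem_range.1 hj
      congr 1
      omega
    rw [Finset.sum_congr rfl hc, Finset.sum_const, Finset.card_range, nsmul_eq_mul]
    push_cast; ring
  have h2 : (∑' n : ℕ, (fun j => f (j - η + i)) (n + (η + 1))) = ∑' n, f (n + (1 + i)) :=
    tsum_congr fun n => by
      show f (n + (η + 1) - η + i) = f (n + (1 + i))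
      congr 1; omega
  have h3 : ∑' n, f (n + (1 + i)) ≤ ∑' j, f j := by
    have k2 := Summable.sum_add_tsum_nat_add (f := f) (1 + i) hf
    have : 0 ≤ ∑ j ∈ range (1 + i), f j := Finset.sum_nonneg fun j _ => hnn j
    linarith
  have h4 : f i ≤ ∑' j, f j := Summable.le_tsum hf i fun j _ => hnn j
  have h5 : ((η : ℝ) + 1) * f i ≤ ((η : ℝ) + 1) * ∑' j, f j :=
    mul_le_mul_of_nonneg_left h4 (by positivity)
  rw [h2, h1] at key
  linarith

private lemma window_le' {f : ℕ → ℝ} (hnn : ∀ j, 0 ≤ f j) (η j : ℕ) :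
    ∑ k ∈ Finset.Icc (j - η) (j + η), f k ≤ ∑ i ∈ Finset.range (2*η+1), f (j - η + i) := by
  have himg : Finset.Icc (j - η) (j + η) ⊆
      (Finset.range (2*η+1)).image (fun i => j - η + i) := by
    intro k hk
    simp only [Finset.mem_Icc] at hk
    simp only [Finset.mem_image, Finset.mem_range]
    exact ⟨k - (j - η), by omega, by omega⟩
  calc ∑ k ∈ Finset.Icc (j - η) (j + η), f k
      ≤ ∑ k ∈ (Finset.range (2*η+1)).image (fun i => j - η + i), f k :=
        Finset.sum_le_sum_of_subset_of_nonneg himg (fun k _ _ => hnn k)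
    _ = ∑ i ∈ Finset.range (2*η+1), f (j - η + i) :=
        Finset.sum_image (by intro a _ b _ h; simp only at h; omega)

private lemma ratio_bound' {m M : ℝ} (hm : 0 < m) (p : ℕ → ℝ) (hp : ∀ j, 0 < p j)
    (hratio : ∀ j, p (j+1)/p j ∈ Set.Ioo m M) (η : ℕ) :
    ∀ j k, k ∈ Finset.Icc (j - η) (j + η) → p j ≤ (max (max M m⁻¹) 1) ^ η * p k := by
  set L := max (max M m⁻¹) 1 with hLdef
  have hL1 : (1:ℝ) ≤ L := le_max_right _ _
  have hLM : M ≤ L := le_trans (le_max_left _ _) (le_max_left _ _)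
  have hLm : m⁻¹ ≤ L := le_trans (le_max_right _ _) (le_max_left _ _)
  have hL0 : (0:ℝ) < L := lt_of_lt_of_le one_pos hL1
  have stepup : ∀ n, p (n+1) ≤ L * p n := by
    intro n
    have h := (hratio n).2
    have := (div_lt_iff₀ (hp n)).1 h
    nlinarith [hp n]
  have stepdown : ∀ n, p n ≤ L * p (n+1) := by
    intro n
    have h := (hratio n).1
    have h2 : m * p n < p (n+1) := by
      have := (lt_div_iff₀ (hp n)).1 h
      linarith
    have h3 : p n ≤ m⁻¹ * p (n+1) := by
      have h4 : m⁻¹ * (m * p n) ≤ m⁻¹ * p (n+1) :=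
        mul_le_mul_of_nonneg_left h2.le (inv_nonneg.2 hm.le)
      calc p n = m⁻¹ * (m * p n) := by field_simp
        _ ≤ m⁻¹ * p (n+1) := h4
    calc p n ≤ m⁻¹ * p (n+1) := h3
      _ ≤ L * p (n+1) := mul_le_mul_of_nonneg_right hLm (hp _).le
  have up : ∀ d k, p (k + d) ≤ L ^ d * p k := by
    intro d
    induction d with
    | zero => intro k; simp
    | succ n ih =>
      intro k
      calc p (k + (n+1)) = p ((k + n) + 1) := rfl
        _ ≤ L * p (k + n) := stepup _
        _ ≤ L * (L ^ n * p k) := mul_le_mul_of_nonneg_left (ih k) hL0.le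
        _ = L ^ (n+1) * p k := by ring
  have down : ∀ d k, p k ≤ L ^ d * p (k + d) := by
    intro d
    induction d with
    | zero => intro k; simp
    | succ n ih =>
      intro k
      calc p k ≤ L ^ n * p (k + n) := ih k
        _ ≤ L ^ n * (L * p (k + n + 1)) :=
          mul_le_mul_of_nonneg_left (stepdown _) (by positivity)
        _ = L ^ (n+1) * p (k + (n+1)) := by rw [← mul_assoc, ← pow_succ]; rfl
  intro j k hk
  simp only [Finset.mem_Icc] at hk
  rcases le_or_gt k j with hkj | hjk
  · obtain ⟨d, rfl⟩ : ∃ d, j = k + d := ⟨j - k, by omega⟩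
    have hd : d ≤ η := by omega
    calc p (k + d) ≤ L ^ d * p k := up d k
      _ ≤ L ^ η * p k := mul_le_mul_of_nonneg_right (pow_le_pow_right₀ hL1 hd) (hp k).le
  · obtain ⟨d, rfl⟩ : ∃ d, k = j + d := ⟨k - j, by omega⟩
    have hd : d ≤ η := by omega
    calc p j ≤ L ^ d * p (j + d) := down d j
      _ ≤ L ^ η * p (j + d) := mul_le_mul_of_nonneg_right (pow_le_pow_right₀ hL1 hd) (hp _).le
theorem stmt_19 (m M : ℝ) (hm : 0 < m) (hmM : m < M)
    (p α : ℕ → ℝ) (hp : ∀ j, 0 < p j) (hα : ∀ j, 0 < α j)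
    (hpsum : Summable p) (hαsum : Summable α)
    (hratio : ∀ j, p (j + 1) / p j ∈ Set.Ioo m M)
    (c : ℝ) (hc : ∀ j, α j / p j ≤ c)
    (η : ℕ) (b : ℕ → ℕ → ℝ)
    (hband : ∀ i j : ℕ, η < Int.natAbs ((i : ℤ) - (j : ℤ)) → b i j = 0)
    (hbound : ∀ i j, |b i j| ≤ α i) (hsymm : ∀ i j, b i j = b j i) :
    ∃ C > 0, ∀ x : ℕ → ℝ, Summable (fun j => x j ^ 2 * p j) →
      Summable (fun j =>
        |x j ^ 2 - (x j + ∑ k ∈ Finset.Icc (j - η) (j + η), b j k * x k) ^ 2|) ∧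
      |∑' j, (x j ^ 2 - (x j + ∑ k ∈ Finset.Icc (j - η) (j + η), b j k * x k) ^ 2)|
        ≤ C * ∑' j, x j ^ 2 * p j := by
  set L := max (max M m⁻¹) 1 with hLdef
  have hL0 : (0:ℝ) < L := lt_of_lt_of_le one_pos (le_max_right _ _)
  set K := L ^ η with hKdef
  have hK0 : (0:ℝ) < K := pow_pos hL0 η
  set P := ∑' j, p j with hPdef
  have hP0 : (0:ℝ) < P := lt_of_lt_of_le (hp 0) (Summable.le_tsum hpsum 0 fun j _ => (hp j).le)
  have hc0 : (0:ℝ) < c := lt_of_lt_of_le (div_pos (hα 0) (hp 0)) (hc 0)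
  have hαp : ∀ j, α j ≤ c * p j := fun j => (div_le_iff₀ (hp j)).1 (hc j)
  set A1 : ℝ := c * (2*η+1) with hA1def
  set A2 : ℝ := c * K + c^2 * P * (2*η+1) * K with hA2def
  have hA10 : 0 < A1 := mul_pos hc0 (by positivity)
  have hA20 : 0 < A2 :=
    add_pos (mul_pos hc0 hK0)
      (mul_pos (mul_pos (mul_pos (pow_pos hc0 2) hP0) (by positivity)) hK0)
  refine ⟨A1 + A2 * ((2*η+1) * (η+2)), add_pos hA10 (mul_pos hA20 (by positivity)), fun x hx => ?_⟩
  set f : ℕ → ℝ := fun j => x j ^ 2 * p j with hfdef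
  have hfnn : ∀ j, 0 ≤ f j := fun j => mul_nonneg (sq_nonneg _) (hp j).le
  set g : ℕ → ℝ := fun j => ∑ k ∈ Finset.Icc (j - η) (j + η), f k with hgdef
  have hgnn : ∀ j, 0 ≤ g j := fun j => Finset.sum_nonneg fun k _ => hfnn k
  -- window sum is summable and controlled
  have hG : Summable fun j => ∑ i ∈ Finset.range (2*η+1), f (j - η + i) :=
    summable_sum fun i _ => shift_summable' hx η i
  have hgle : ∀ j, g j ≤ ∑ i ∈ Finset.range (2*η+1), f (j - η + i) :=
    fun j => window_le' hfnn η j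
  have hgsum : Summable g := Summable.of_nonneg_of_le hgnn hgle hG
  have htg : ∑' j, g j ≤ (2*η+1) * ((η+2) * ∑' j, f j) := by
    calc ∑' j, g j ≤ ∑' j, ∑ i ∈ Finset.range (2*η+1), f (j - η + i) :=
          Summable.tsum_le_tsum hgle hgsum hG
      _ = ∑ i ∈ Finset.range (2*η+1), ∑' j, f (j - η + i) :=
          Summable.tsum_finsetSum fun i _ => shift_summable' hx η i
      _ ≤ ∑ i ∈ Finset.range (2*η+1), ((η:ℝ)+2) * ∑' j, f j :=
          Finset.sum_le_sum fun i _ => shift_tsum_le' hx hfnn η i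
      _ = (2*η+1) * ((η+2) * ∑' j, f j) := by
          rw [Finset.sum_const, Finset.card_range, nsmul_eq_mul]
          push_cast; ring
  -- termwise bound
  have hterm : ∀ j, |x j ^ 2 - (x j + ∑ k ∈ Finset.Icc (j - η) (j + η), b j k * x k) ^ 2|
      ≤ A1 * f j + A2 * g j := by
    intro j
    set B := ∑ k ∈ Finset.Icc (j - η) (j + η), b j k * x k with hBdef
    set T := ∑ k ∈ Finset.Icc (j - η) (j + η), |x k| with hTdef
    set Q := ∑ k ∈ Finset.Icc (j - η) (j + η), x k ^ 2 with hQdef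
    have hT0 : 0 ≤ T := Finset.sum_nonneg fun k _ => abs_nonneg _
    have hQ0 : 0 ≤ Q := Finset.sum_nonneg fun k _ => sq_nonneg _
    have hcard : ((Finset.Icc (j - η) (j + η)).card : ℝ) ≤ 2*η+1 := by
      rw [Nat.card_Icc]
      push_cast
      have : j + η + 1 - (j - η) ≤ 2*η+1 := by omega
      exact_mod_cast this
    have h1 : |B| ≤ c * p j * T := by
      calc |B| ≤ ∑ k ∈ Finset.Icc (j - η) (j + η), |b j k * x k| :=
            Finset.abs_sum_le_sum_abs _ _
        _ ≤ ∑ k ∈ Finset.Icc (j - η) (j + η), (c * p j) * |x k| :=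
            Finset.sum_le_sum fun k _ => by
              rw [abs_mul]
              exact mul_le_mul_of_nonneg_right (le_trans (hbound j k) (hαp j)) (abs_nonneg _)
        _ = c * p j * T := by rw [hTdef, Finset.mul_sum]
    have h2 : 2 * |x j| * T ≤ (2*η+1) * x j ^ 2 + Q := by
      calc 2 * |x j| * T = ∑ k ∈ Finset.Icc (j - η) (j + η), 2 * |x j| * |x k| := by
            rw [hTdef, Finset.mul_sum]
        _ ≤ ∑ k ∈ Finset.Icc (j - η) (j + η), (x j ^ 2 + x k ^ 2) :=
            Finset.sum_le_sum fun k _ => by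
              nlinarith [sq_nonneg (|x j| - |x k|), sq_abs (x j), sq_abs (x k)]
        _ = ((Finset.Icc (j - η) (j + η)).card : ℝ) * x j ^ 2 + Q := by
            rw [Finset.sum_add_distrib, Finset.sum_const, nsmul_eq_mul, hQdef]
        _ ≤ (2*η+1) * x j ^ 2 + Q :=
            add_le_add (mul_le_mul_of_nonneg_right hcard (sq_nonneg _)) le_rfl
    have h3 : T ^ 2 ≤ (2*η+1) * Q := by
      calc T ^ 2 ≤ ((Finset.Icc (j - η) (j + η)).card : ℝ) *
            ∑ k ∈ Finset.Icc (j - η) (j + η), |x k| ^ 2 := sq_sum_le_card_mul_sum_sq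
        _ = ((Finset.Icc (j - η) (j + η)).card : ℝ) * Q := by
            rw [hQdef]; congr 1; exact Finset.sum_congr rfl fun k _ => sq_abs _
        _ ≤ (2*η+1) * Q := mul_le_mul_of_nonneg_right hcard hQ0
    have h4 : p j * Q ≤ K * g j := by
      calc p j * Q = ∑ k ∈ Finset.Icc (j - η) (j + η), p j * x k ^ 2 := by
            rw [hQdef, Finset.mul_sum]
        _ ≤ ∑ k ∈ Finset.Icc (j - η) (j + η), K * (x k ^ 2 * p k) :=
            Finset.sum_le_sum fun k hk => by
              have := ratio_bound' hm p hp hratio η j k hk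
              nlinarith [sq_nonneg (x k)]
        _ = K * g j := by rw [hgdef, hfdef, Finset.mul_sum]
    have h5 : p j ≤ P := Summable.le_tsum hpsum j fun i _ => (hp i).le
    have habs : |x j ^ 2 - (x j + B) ^ 2| ≤ 2 * |x j| * |B| + B ^ 2 := by
      have he : x j ^ 2 - (x j + B) ^ 2 = -(2 * (x j * B) + B ^ 2) := by ring
      rw [he, abs_neg]
      calc |2 * (x j * B) + B ^ 2| ≤ |2 * (x j * B)| + |B ^ 2| := abs_add_le _ _
        _ = 2 * |x j| * |B| + B ^ 2 := by
            rw [abs_mul, abs_mul, abs_two, abs_pow]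
            rw [sq_abs]
            ring
    have piece1 : 2 * |x j| * |B| ≤ A1 * f j + c * K * g j := by
      calc 2 * |x j| * |B| = (2 * |x j|) * |B| := by ring
        _ ≤ (2 * |x j|) * (c * p j * T) := mul_le_mul_of_nonneg_left h1 (by positivity)
        _ = (c * p j) * (2 * |x j| * T) := by ring
        _ ≤ (c * p j) * ((2*η+1) * x j ^ 2 + Q) :=
            mul_le_mul_of_nonneg_left h2 (mul_nonneg hc0.le (hp j).le)
        _ = A1 * f j + c * (p j * Q) := by rw [hA1def, hfdef]; ring
        _ ≤ A1 * f j + c * (K * g j) :=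
            add_le_add le_rfl (mul_le_mul_of_nonneg_left h4 hc0.le)
        _ = A1 * f j + c * K * g j := by ring
    have piece2 : B ^ 2 ≤ c^2 * P * (2*η+1) * K * g j := by
      calc B ^ 2 = |B| ^ 2 := (sq_abs _).symm
        _ ≤ (c * p j * T) ^ 2 := pow_le_pow_left₀ (abs_nonneg _) h1 2
        _ = (c^2 * p j * p j) * T ^ 2 := by ring
        _ ≤ (c^2 * p j * p j) * ((2*η+1) * Q) :=
            mul_le_mul_of_nonneg_left h3
              (mul_nonneg (mul_nonneg (sq_nonneg c) (hp j).le) (hp j).le)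
        _ = (c^2 * (2*η+1) * p j) * (p j * Q) := by ring
        _ ≤ (c^2 * (2*η+1) * p j) * (K * g j) :=
            mul_le_mul_of_nonneg_left h4
              (mul_nonneg (mul_nonneg (sq_nonneg c) (by positivity)) (hp j).le)
        _ = (c^2 * (2*η+1) * K * g j) * p j := by ring
        _ ≤ (c^2 * (2*η+1) * K * g j) * P :=
            mul_le_mul_of_nonneg_left h5
              (mul_nonneg (mul_nonneg (mul_nonneg (sq_nonneg c) (by positivity)) hK0.le)
                (hgnn j))
        _ = c^2 * P * (2*η+1) * K * g j := by ring
    calc |x j ^ 2 - (x j + B) ^ 2| ≤ 2 * |x j| * |B| + B ^ 2 := habs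
      _ ≤ (A1 * f j + c * K * g j) + c^2 * P * (2*η+1) * K * g j := add_le_add piece1 piece2
      _ = A1 * f j + A2 * g j := by rw [hA2def]; ring
  have hdom : Summable fun j => A1 * f j + A2 * g j :=
    Summable.add (hx.mul_left A1) (hgsum.mul_left A2)
  have habs_sum : Summable fun j =>
      |x j ^ 2 - (x j + ∑ k ∈ Finset.Icc (j - η) (j + η), b j k * x k) ^ 2| :=
    Summable.of_nonneg_of_le (fun j => abs_nonneg _) hterm hdom
  refine ⟨habs_sum, ?_⟩
  have hsum : Summable fun j =>
      x j ^ 2 - (x j + ∑ k ∈ Finset.Icc (j - η) (j + η), b j k * x k) ^ 2 :=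
    habs_sum.of_abs
  have habs_le : |∑' j, (x j ^ 2 - (x j + ∑ k ∈ Finset.Icc (j - η) (j + η), b j k * x k) ^ 2)|
      ≤ ∑' j, |x j ^ 2 - (x j + ∑ k ∈ Finset.Icc (j - η) (j + η), b j k * x k) ^ 2| := by
    have h2 : Summable fun j =>
        ‖x j ^ 2 - (x j + ∑ k ∈ Finset.Icc (j - η) (j + η), b j k * x k) ^ 2‖ := by
      simpa only [Real.norm_eq_abs] using habs_sum
    have h3 := norm_tsum_le_tsum_norm
      (f := fun j => x j ^ 2 - (x j + ∑ k ∈ Finset.Icc (j - η) (j + η), b j k * x k) ^ 2) h2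
    simpa only [Real.norm_eq_abs] using h3
  calc |∑' j, (x j ^ 2 - (x j + ∑ k ∈ Finset.Icc (j - η) (j + η), b j k * x k) ^ 2)|
      ≤ ∑' j, |x j ^ 2 - (x j + ∑ k ∈ Finset.Icc (j - η) (j + η), b j k * x k) ^ 2| := habs_le
    _ ≤ ∑' j, (A1 * f j + A2 * g j) := Summable.tsum_le_tsum hterm habs_sum hdom
    _ = A1 * ∑' j, f j + A2 * ∑' j, g j := by
        rw [Summable.tsum_add (hx.mul_left A1) (hgsum.mul_left A2), tsum_mul_left, tsum_mul_left]
    _ ≤ A1 * ∑' j, f j + A2 * ((2*η+1) * ((η+2) * ∑' j, f j)) :=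
        add_le_add le_rfl (mul_le_mul_of_nonneg_left htg hA20.le)
    _ = (A1 + A2 * ((2*η+1) * (η+2))) * ∑' j, f j := by ring
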